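/- Let N ≥ 2 be an integer, a > -1 a real number, and p ≥ 0 an integer. Then ⟨Σ_{j=1}^{N} λ_j^p⟩^{fL} = ⟨Σ_{j=1}^{N} λ_j^p⟩^{L} / (N^2 + Na)_p, where (u)_p := u(u+1)⋯(u+p-1) is the rising Pochhammer symbol ((u)_0 := 1). -/

import Mathlib

open MeasureTheory Finset

noncomputable section

/-- The positive orthant in `ℝ^N`. -/
def posOrth (N : ℕ) : Set (Fin N → ℝ) := {x | ∀ i, 0 < x i}

/-- The LUE eigenvalue weight: `∏ x_l^a e^{-x_l} ∏_{j<k} (x_k - x_j)^2`. -/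
def lueW (N : ℕ) (a : ℝ) (x : Fin N → ℝ) : ℝ :=
  (∏ l, x l ^ a * Real.exp (-x l)) *
    ∏ j, ∏ k, if j < k then (x k - x j) ^ 2 else 1

/-- The LUE average of a function of the eigenvalues. -/
def lueAvg (N : ℕ) (a : ℝ) (F : (Fin N → ℝ) → ℝ) : ℝ :=
  (∫ x in posOrth N, F x * lueW N a x) / ∫ x in posOrth N, lueW N a x

/-- The open simplex: positive coordinates with sum less than 1. -/
def simplexT (m : ℕ) : Set (Fin m → ℝ) := {x | (∀ i, 0 < x i) ∧ ∑ i, x i < 1}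

/-- Extend `N-1` coordinates in the simplex by the final coordinate `σ = 1 - Σ`. -/
def flFull (N : ℕ) (lam : Fin (N - 1) → ℝ) : Fin N → ℝ :=
  fun i => if h : (i : ℕ) < N - 1 then lam ⟨i, h⟩ else 1 - ∑ j, lam j

/-- The fixed-trace LUE eigenvalue weight: `∏ μ_l^a ∏_{j<k} (μ_k - μ_j)^2`. -/
def flV (N : ℕ) (a : ℝ) (mu : Fin N → ℝ) : ℝ :=
  (∏ l, mu l ^ a) * ∏ j, ∏ k, if j < k then (mu k - mu j) ^ 2 else 1

/-- The fixed-trace LUE average of a function of the eigenvalues. -/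
def flAvg (N : ℕ) (a : ℝ) (F : (Fin N → ℝ) → ℝ) : ℝ :=
  (∫ lam in simplexT (N - 1), F (flFull N lam) * flV N a (flFull N lam)) /
    ∫ lam in simplexT (N - 1), flV N a (flFull N lam)

namespace Stmt4Aux

/-! ### Basic facts about `flFull` -/

lemma flFull_castSucc (m : ℕ) (lam : Fin m → ℝ) (j : Fin m) :
    flFull (m + 1) lam j.castSucc = lam j := by
  have h : ((j.castSucc : Fin (m + 1)) : ℕ) < m + 1 - 1 := by simpa using j.isLt
  simp only [flFull, dif_pos h]
  congr 1
  all_goals exact Fin.ext (by simp)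

lemma flFull_last (m : ℕ) (lam : Fin m → ℝ) :
    flFull (m + 1) lam (Fin.last m) = 1 - ∑ j, lam j := by
  simp only [flFull]
  rw [dif_neg (by simp)]
  rfl

lemma sum_flFull (m : ℕ) (lam : Fin m → ℝ) : ∑ i, flFull (m + 1) lam i = 1 := by
  rw [Fin.sum_univ_castSucc, flFull_last,
    Finset.sum_congr rfl fun j _ => flFull_castSucc m lam j]
  ring

lemma flFull_pos {m : ℕ} {lam : Fin m → ℝ} (h : lam ∈ simplexT m) (i : Fin (m + 1)) :
    0 < flFull (m + 1) lam i := by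
  induction i using Fin.lastCases with
  | last => rw [flFull_last]; linarith [h.2]
  | cast j => rw [flFull_castSucc]; exact h.1 j

/-! ### The polar-type change of variables map and its derivative -/

def gfun (m : ℕ) (i : Fin (m + 1)) (y : Fin (m + 1) → ℝ) : ℝ :=
  if (i : ℕ) < m then y i else 1 - ∑ j : Fin m, y j.castSucc

def flMap (m : ℕ) (y : Fin (m + 1) → ℝ) : Fin (m + 1) → ℝ :=
  fun i => y (Fin.last m) * gfun m i y

lemma flMap_eq (m : ℕ) (y : Fin (m + 1) → ℝ) :
    flMap m y = y (Fin.last m) • flFull (m + 1) (fun j => y j.castSucc) := by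
  funext i; rfl

def dg (m : ℕ) (i : Fin (m + 1)) : (Fin (m + 1) → ℝ) →L[ℝ] ℝ :=
  if (i : ℕ) < m then ContinuousLinearMap.proj i
  else -∑ j : Fin m, ContinuousLinearMap.proj (R := ℝ) (φ := fun _ : Fin (m + 1) => ℝ) j.castSucc

def fder (m : ℕ) (y : Fin (m + 1) → ℝ) : (Fin (m + 1) → ℝ) →L[ℝ] (Fin (m + 1) → ℝ) :=
  ContinuousLinearMap.pi fun i =>
    y (Fin.last m) • dg m i + gfun m i y • ContinuousLinearMap.proj (Fin.last m)

lemma hasFDeriv_gfun (m : ℕ) (i : Fin (m + 1)) (y : Fin (m + 1) → ℝ) :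
    HasFDerivAt (gfun m i) (dg m i) y := by
  unfold gfun dg
  by_cases h : (i : ℕ) < m
  · simp only [if_pos h]
    exact hasFDerivAt_apply i y
  · simp only [if_neg h]
    exact (HasFDerivAt.fun_sum fun j _ => hasFDerivAt_apply (j.castSucc) y).const_sub 1

lemma hasFDeriv_flMap (m : ℕ) (y : Fin (m + 1) → ℝ) :
    HasFDerivAt (flMap m) (fder m y) y := by
  have h : flMap m = fun y (i : Fin (m + 1)) => y (Fin.last m) * gfun m i y := rfl
  rw [h]
  apply hasFDerivAt_pi.2
  intro i
  exact (hasFDerivAt_apply (Fin.last m) y).mul (hasFDeriv_gfun m i y)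

/-! ### The Jacobian determinant -/

lemma det_fder (m : ℕ) (y : Fin (m + 1) → ℝ) :
    (fder m y).det = y (Fin.last m) ^ m := by
  set r := y (Fin.last m) with hr
  rw [ContinuousLinearMap.det, ← LinearMap.det_toMatrix']
  set J := LinearMap.toMatrix' ((fder m y) : (Fin (m + 1) → ℝ) →ₗ[ℝ] (Fin (m + 1) → ℝ)) with hJdef
  have hJ : ∀ i k, J i k = r * dg m i (fun j' => if j' = k then 1 else 0)
      + gfun m i y * (if Fin.last m = k then 1 else 0) := by
    intro i k
    have hpi : (fun j' => if j' = k then (1:ℝ) else 0) = Pi.single k 1 := by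
      funext j'; simp [Pi.single_apply]
    rw [hpi]
    simp [hJdef, LinearMap.toMatrix'_apply, fder, ContinuousLinearMap.pi_apply,
      ContinuousLinearMap.add_apply, ContinuousLinearMap.smul_apply,
      ContinuousLinearMap.proj_apply, smul_eq_mul, Pi.single_apply, hr]
  have hcs : ∀ (j : Fin m) (k : Fin (m + 1)), J j.castSucc k =
      r * (if j.castSucc = k then 1 else 0) + y j.castSucc * (if Fin.last m = k then 1 else 0) := by
    intro j k
    rw [hJ]
    congr 2
    · simp [dg, j.isLt, ContinuousLinearMap.proj_apply]
    · simp [gfun, j.isLt]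
  have hlastrow : ∀ k, J (Fin.last m) k =
      r * (-(∑ j : Fin m, if j.castSucc = k then 1 else 0))
        + (1 - ∑ j : Fin m, y j.castSucc) * (if Fin.last m = k then 1 else 0) := by
    intro k
    rw [hJ]
    congr 2
    · simp [dg, ContinuousLinearMap.neg_apply, ContinuousLinearMap.sum_apply,
        ContinuousLinearMap.proj_apply]
    · simp [gfun]
  have hv : ∀ k, (∑ i, J i) k = (if Fin.last m = k then 1 else 0) := by
    intro k
    rw [show (∑ i, J i) k = ∑ i, J i k from Finset.sum_apply k _ _]
    rw [Fin.sum_univ_castSucc (f := fun i => J i k)]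
    rw [hlastrow, Finset.sum_congr rfl (fun j _ => hcs j k),
      Finset.sum_add_distrib, ← Finset.mul_sum, ← Finset.sum_mul]
    ring
  have h1 : J.det = (J.updateRow (Fin.last m) (∑ k, J k)).det := by
    have h2 := Matrix.det_updateRow_sum J (Fin.last m) (fun _ => (1 : ℝ))
    simp only [one_smul] at h2
    rw [h2]
  have trian : (J.updateRow (Fin.last m) (∑ k, J k)).BlockTriangular id := by
    intro i k hki
    simp only [id] at hki
    induction i using Fin.lastCases with
    | last =>
        rw [Matrix.updateRow_self]
        rw [hv k, if_neg hki.ne']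
    | cast j =>
        rw [Matrix.updateRow_ne (Fin.castSucc_lt_last j).ne]
        rw [hcs j k, if_neg (ne_of_gt hki), if_neg (ne_of_gt (hki.trans (Fin.castSucc_lt_last j)))]
        ring
  rw [h1, Matrix.det_of_upperTriangular trian]
  rw [Fin.prod_univ_castSucc (f := fun i => (J.updateRow (Fin.last m) (∑ k, J k)) i i)]
  have hdiag : ∀ j : Fin m, (J.updateRow (Fin.last m) (∑ k, J k)) j.castSucc j.castSucc = r := by
    intro j
    rw [Matrix.updateRow_ne (Fin.castSucc_lt_last j).ne, hcs j j.castSucc,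
      if_pos rfl, if_neg (Fin.castSucc_lt_last j).ne']
    ring
  have hlastdiag : (J.updateRow (Fin.last m) (∑ k, J k)) (Fin.last m) (Fin.last m) = 1 := by
    rw [Matrix.updateRow_self, hv, if_pos rfl]
  rw [hlastdiag, Finset.prod_congr rfl (fun j _ => hdiag j), Finset.prod_const, mul_one]
  simp

/-! ### Homogeneity of the weight -/

lemma vdm_const (n : ℕ) {r : ℝ} (hr : 0 < r) :
    (∏ j : Fin n, ∏ k : Fin n, if j < k then r ^ 2 else 1) = r ^ (n * (n - 1)) := by
  have hsymm : (∏ j : Fin n, ∏ k : Fin n, if k < j then r ^ 2 else 1)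
      = ∏ j : Fin n, ∏ k : Fin n, if j < k then r ^ 2 else 1 := Finset.prod_comm
  have hsq : ((∏ j : Fin n, ∏ k : Fin n, if j < k then r ^ 2 else 1)
        * ∏ j : Fin n, ∏ k : Fin n, if k < j then r ^ 2 else 1)
      = ∏ j : Fin n, ∏ k : Fin n, if j ≠ k then r ^ 2 else 1 := by
    rw [← Finset.prod_mul_distrib]
    refine Finset.prod_congr rfl fun j _ => ?_
    rw [← Finset.prod_mul_distrib]
    refine Finset.prod_congr rfl fun k _ => ?_
    rcases lt_trichotomy j k with h | h | h
    · simp [h, not_lt_of_gt h, h.ne]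
    · simp [h]
    · simp [h, not_lt_of_gt h, h.ne']
  have hcount : (∏ j : Fin n, ∏ k : Fin n, if j ≠ k then r ^ 2 else 1)
      = r ^ (2 * (n * (n - 1))) := by
    have h1 : ∀ j : Fin n, (∏ k : Fin n, if j ≠ k then r ^ 2 else 1) = r ^ (2 * (n - 1)) := by
      intro j
      rw [← Finset.prod_erase_mul _ _ (Finset.mem_univ j)]
      rw [if_neg (by simp)]
      rw [Finset.prod_congr rfl (fun k hk => if_pos (Finset.ne_of_mem_erase hk).symm)]
      rw [Finset.prod_const, Finset.card_erase_of_mem (Finset.mem_univ j), Finset.card_univ,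
        Fintype.card_fin, mul_one, ← pow_mul]
    rw [Finset.prod_congr rfl fun j _ => h1 j, Finset.prod_const, Finset.card_univ,
      Fintype.card_fin, ← pow_mul]
    congr 1
    ring
  have hpos : 0 < ∏ j : Fin n, ∏ k : Fin n, if j < k then r ^ 2 else 1 := by
    apply Finset.prod_pos
    intro j _
    apply Finset.prod_pos
    intro k _
    split_ifs
    · positivity
    · norm_num
  have hh : r ^ (2 * (n * (n - 1))) = (r ^ (n * (n - 1))) ^ 2 := by
    rw [← pow_mul]
    congr 1
    ring
  have hsq2 : (∏ j : Fin n, ∏ k : Fin n, if j < k then r ^ 2 else 1) ^ 2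
      = (r ^ (n * (n - 1))) ^ 2 := by
    rw [sq, ← hh, ← hcount, ← hsq, hsymm]
  have habs := (sq_eq_sq_iff_abs_eq_abs _ _).1 hsq2
  rwa [abs_of_pos hpos, abs_of_pos (pow_pos hr _)] at habs

lemma lueW_smul (m : ℕ) (a : ℝ) {r : ℝ} (hr : 0 < r) {mu : Fin (m + 1) → ℝ}
    (hmu : ∀ i, 0 < mu i) (hsum : ∑ i, mu i = 1) :
    lueW (m + 1) a (r • mu) =
      (r ^ a) ^ (m + 1) * r ^ (m * (m + 1)) * Real.exp (-r) * flV (m + 1) a mu := by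
  unfold lueW flV
  have h1 : (∏ l, (r • mu) l ^ a * Real.exp (-(r • mu) l))
      = (r ^ a) ^ (m + 1) * Real.exp (-r) * ∏ l, mu l ^ a := by
    have he : ∀ l : Fin (m + 1), (r • mu) l ^ a * Real.exp (-(r • mu) l)
        = r ^ a * (mu l ^ a * Real.exp (-(r * mu l))) := by
      intro l
      simp only [Pi.smul_apply, smul_eq_mul]
      rw [Real.mul_rpow hr.le (hmu l).le]
      ring
    rw [Finset.prod_congr rfl fun l _ => he l, Finset.prod_mul_distrib, Finset.prod_const,
      Finset.card_univ, Fintype.card_fin, Finset.prod_mul_distrib, ← Real.exp_sum]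
    have hes : ∑ l, -(r * mu l) = -r := by
      rw [Finset.sum_neg_distrib, ← Finset.mul_sum, hsum, mul_one]
    rw [hes]
    ring
  have h2 : (∏ j : Fin (m + 1), ∏ k, if j < k then ((r • mu) k - (r • mu) j) ^ 2 else 1)
      = r ^ (m * (m + 1)) *
        ∏ j : Fin (m + 1), ∏ k, if j < k then (mu k - mu j) ^ 2 else 1 := by
    have he : ∀ j k : Fin (m + 1), (if j < k then ((r • mu) k - (r • mu) j) ^ 2 else 1)
        = (if j < k then r ^ 2 else 1) * (if j < k then (mu k - mu j) ^ 2 else 1) := by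
      intro j k
      split_ifs
      · simp only [Pi.smul_apply, smul_eq_mul]; ring
      · norm_num
    calc (∏ j : Fin (m + 1), ∏ k, if j < k then ((r • mu) k - (r • mu) j) ^ 2 else 1)
        = ∏ j : Fin (m + 1), ∏ k, ((if j < k then r ^ 2 else 1)
            * (if j < k then (mu k - mu j) ^ 2 else 1)) :=
          Finset.prod_congr rfl fun j _ => Finset.prod_congr rfl fun k _ => he j k
      _ = (∏ j : Fin (m + 1), ∏ k, if j < k then r ^ 2 else 1)
          * ∏ j : Fin (m + 1), ∏ k, if j < k then (mu k - mu j) ^ 2 else 1 := by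
          rw [← Finset.prod_mul_distrib]
          exact Finset.prod_congr rfl fun j _ => Finset.prod_mul_distrib
      _ = r ^ (m * (m + 1)) * ∏ j : Fin (m + 1), ∏ k, if j < k then (mu k - mu j) ^ 2 else 1 := by
          rw [vdm_const _ hr]
          norm_num [Nat.mul_comm]
  rw [h1, h2]
  ring

/-! ### Gamma and Pochhammer -/

lemma Gamma_ascPochhammer (s : ℝ) (hs : 0 < s) (p : ℕ) :
    Real.Gamma (s + p) = (ascPochhammer ℝ p).eval s * Real.Gamma s := by
  induction p with
  | zero => simp
  | succ p ih =>
      have h1 : s + ((p : ℝ) + 1) = (s + p) + 1 := by ring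
      have h2 : s + (p : ℝ) ≠ 0 := by positivity
      push_cast
      rw [h1, Real.Gamma_add_one h2, ih, ascPochhammer_succ_right]
      simp [Polynomial.eval_mul]
      ring

/-! ### Measurability of the simplex -/

lemma measurableSet_simplexT (m : ℕ) : MeasurableSet (simplexT m) := by
  have h1 : MeasurableSet {x : Fin m → ℝ | ∀ i, 0 < x i} := by
    rw [Set.setOf_forall]
    exact MeasurableSet.iInter fun i =>
      measurableSet_lt measurable_const (measurable_pi_apply i)
  have h2 : MeasurableSet {x : Fin m → ℝ | ∑ i, x i < 1} :=
    measurableSet_lt (Finset.univ.measurable_sum fun i _ => measurable_pi_apply i)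
      measurable_const
  exact h1.inter h2

/-! ### The master factorization -/

lemma master (m : ℕ) (a : ℝ) (ha : -1 < a) (G : (Fin (m + 1) → ℝ) → ℝ) (d : ℕ)
    (hG : ∀ r : ℝ, 0 < r → ∀ mu : Fin (m + 1) → ℝ, G (r • mu) = r ^ d * G mu) :
    ∫ x in posOrth (m + 1), G x * lueW (m + 1) a x =
      Real.Gamma (((m : ℝ) + 1) ^ 2 + ((m : ℝ) + 1) * a + d) *
        ∫ lam in simplexT m, G (flFull (m + 1) lam) * flV (m + 1) a (flFull (m + 1) lam) := by
  classical
  set s₀ : ℝ := ((m : ℝ) + 1) ^ 2 + ((m : ℝ) + 1) * a + d with hs₀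
  have hs₀pos : 0 < s₀ := by
    have h1 : (0:ℝ) < (m:ℝ) + 1 := by positivity
    have h2 : (0:ℝ) < (m:ℝ) + 1 + a := by linarith
    have h3 : (0:ℝ) ≤ (d:ℝ) := Nat.cast_nonneg d
    have h4 : ((m:ℝ)+1)^2 + ((m:ℝ)+1)*a = ((m:ℝ)+1) * (((m:ℝ)+1) + a) := by ring
    nlinarith
  set eqv := MeasurableEquiv.piFinSuccAbove (fun _ : Fin (m + 1) => ℝ) (Fin.last m) with heqv
  set S : Set (Fin (m + 1) → ℝ) := ⇑eqv ⁻¹' (Set.Ioi (0:ℝ) ×ˢ simplexT m) with hSdef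
  have heqvapp : ∀ y : Fin (m + 1) → ℝ, eqv y = (y (Fin.last m), fun j => y j.castSucc) := by
    intro y
    rw [heqv]
    refine Prod.ext ?_ ?_
    · rfl
    · funext j
      show y ((Fin.last m).succAbove j) = y j.castSucc
      rw [Fin.succAbove_last]
  have hmemS : ∀ y : Fin (m + 1) → ℝ, y ∈ S ↔
      (0 < y (Fin.last m) ∧ ((∀ j : Fin m, 0 < y j.castSucc) ∧ ∑ j : Fin m, y j.castSucc < 1)) := by
    intro y
    rw [hSdef, Set.mem_preimage, heqvapp y, Set.mem_prod]
    rfl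
  have hSmeas : MeasurableSet S := by
    rw [hSdef]
    exact eqv.measurable (measurableSet_Ioi.prod (measurableSet_simplexT m))
  have himg : flMap m '' S = posOrth (m + 1) := by
    ext x
    constructor
    · rintro ⟨y, hy, rfl⟩
      rw [hmemS] at hy
      obtain ⟨hr, hpos, hlt⟩ := hy
      intro i
      rw [flMap_eq]
      have hp := flFull_pos (m := m) (lam := fun j => y j.castSucc) ⟨hpos, hlt⟩ i
      simpa using mul_pos hr hp
    · intro hx
      set r := ∑ i, x i with hrdef
      have hrpos : 0 < r := Finset.sum_pos (fun i _ => hx i) ⟨Fin.last m, Finset.mem_univ _⟩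
      have hsum' : r = (∑ j : Fin m, x j.castSucc) + x (Fin.last m) := by
        rw [hrdef, Fin.sum_univ_castSucc]
      set y : Fin (m + 1) → ℝ := fun i => if (i : ℕ) < m then x i / r else r with hy
      have hylast : y (Fin.last m) = r := by simp [hy]
      have hycs : ∀ j : Fin m, y j.castSucc = x j.castSucc / r := by
        intro j; simp [hy, j.isLt]
      refine ⟨y, ?_, ?_⟩
      · rw [hmemS]
        refine ⟨by rw [hylast]; exact hrpos, fun j => ?_, ?_⟩
        · rw [hycs j]; exact div_pos (hx _) hrpos
        · rw [Finset.sum_congr rfl fun j _ => hycs j, ← Finset.sum_div, div_lt_one hrpos]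
          have := hx (Fin.last m); linarith [hsum']
      · funext i
        have hfm : flMap m y i = y (Fin.last m) * gfun m i y := rfl
        rw [hfm, hylast]
        by_cases h : (i : ℕ) < m
        · rw [gfun, if_pos h]
          have hyi : y i = x i / r := by simp [hy, h]
          rw [hyi, mul_div_cancel₀ _ hrpos.ne']
        · rw [gfun, if_neg h]
          have hi : i = Fin.last m := by
            apply Fin.ext
            have := i.isLt
            simp only [Fin.val_last]
            omega
          rw [Finset.sum_congr rfl fun j _ => hycs j, ← Finset.sum_div, hi,
            mul_sub, mul_one, mul_div_cancel₀ _ hrpos.ne']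
          linarith [hsum']
  have hinj : Set.InjOn (flMap m) S := by
    intro y1 h1 y2 h2 heqf
    rw [hmemS] at h1 h2
    have hsumf : ∀ y : Fin (m + 1) → ℝ, ∑ i, flMap m y i = y (Fin.last m) := by
      intro y
      have hc : ∀ i, flMap m y i = y (Fin.last m) * flFull (m + 1) (fun j => y j.castSucc) i :=
        fun i => congrFun (flMap_eq m y) i
      rw [Finset.sum_congr rfl fun i _ => hc i, ← Finset.mul_sum, sum_flFull, mul_one]
    have hlast : y1 (Fin.last m) = y2 (Fin.last m) := by
      rw [← hsumf y1, ← hsumf y2, heqf]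
    funext i
    induction i using Fin.lastCases with
    | last => exact hlast
    | cast j =>
        have e1 : flMap m y1 j.castSucc = y1 (Fin.last m) * y1 j.castSucc := by
          simp [flMap, gfun, j.isLt]
        have e2 : flMap m y2 j.castSucc = y2 (Fin.last m) * y2 j.castSucc := by
          simp [flMap, gfun, j.isLt]
        have hc := congrFun heqf j.castSucc
        rw [e1, e2, hlast] at hc
        exact mul_left_cancel₀ (ne_of_gt h2.1) hc
  have hfd : ∀ y ∈ S, HasFDerivWithinAt (flMap m) (fder m y) S y :=
    fun y _ => (hasFDeriv_flMap m y).hasFDerivWithinAt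
  rw [← himg, integral_image_eq_integral_abs_det_fderiv_smul volume hSmeas hfd hinj]
  set Φ : ℝ × (Fin m → ℝ) → ℝ := fun z => (Real.exp (-z.1) * z.1 ^ (s₀ - 1)) *
    (G (flFull (m + 1) z.2) * flV (m + 1) a (flFull (m + 1) z.2)) with hΦ
  have hptwise : Set.EqOn
      (fun y => |(fder m y).det| • (G (flMap m y) * lueW (m + 1) a (flMap m y)))
      (fun y => Φ (eqv y)) S := by
    intro y hy
    rw [hmemS] at hy
    obtain ⟨hr', hlam1, hlam2⟩ := hy
    have hlam' : (fun j => y j.castSucc) ∈ simplexT m := ⟨hlam1, hlam2⟩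
    show |(fder m y).det| • (G (flMap m y) * lueW (m + 1) a (flMap m y)) = Φ (eqv y)
    rw [det_fder, flMap_eq, heqvapp y, hΦ]
    set r := y (Fin.last m) with hrr
    have hr : 0 < r := hr'
    rw [abs_of_pos (pow_pos hr m)]
    rw [hG r hr _]
    have hlw := lueW_smul m a hr (mu := flFull (m + 1) fun j => y j.castSucc)
      (fun i => flFull_pos hlam' i) (sum_flFull m (fun j => y j.castSucc))
    rw [hlw]
    have hpow : (r : ℝ) ^ m * r ^ d * (r ^ a) ^ (m + 1) * r ^ (m * (m + 1)) = r ^ (s₀ - 1) := by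
      rw [← Real.rpow_natCast r m, ← Real.rpow_natCast r d,
        ← Real.rpow_natCast (r ^ a) (m + 1), ← Real.rpow_mul hr.le,
        ← Real.rpow_natCast r (m * (m + 1)),
        ← Real.rpow_add hr, ← Real.rpow_add hr, ← Real.rpow_add hr]
      congr 1
      rw [hs₀]
      push_cast
      ring
    show r ^ m * (r ^ d * G (flFull (m + 1) fun j => y j.castSucc) *
        ((r ^ a) ^ (m + 1) * r ^ (m * (m + 1)) * Real.exp (-r) *
          flV (m + 1) a (flFull (m + 1) fun j => y j.castSucc)))
      = Real.exp (-r) * r ^ (s₀ - 1) *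
        (G (flFull (m + 1) fun j => y j.castSucc) *
          flV (m + 1) a (flFull (m + 1) fun j => y j.castSucc))
    rw [← hpow]
    ring
  rw [setIntegral_congr_fun hSmeas hptwise]
  rw [hSdef]
  rw [(volume_preserving_piFinSuccAbove (fun _ : Fin (m + 1) => ℝ)
      (Fin.last m)).setIntegral_preimage_emb (MeasurableEquiv.measurableEmbedding _) Φ _]
  rw [Measure.volume_eq_prod]
  have hsplit : (∫ z in Set.Ioi (0:ℝ) ×ˢ simplexT m, Φ z ∂(volume.prod volume))
      = (∫ u in Set.Ioi (0:ℝ), Real.exp (-u) * u ^ (s₀ - 1)) *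
        ∫ v in simplexT m, G (flFull (m + 1) v) * flV (m + 1) a (flFull (m + 1) v) :=
    setIntegral_prod_mul (fun u : ℝ => Real.exp (-u) * u ^ (s₀ - 1))
      (fun v : Fin m → ℝ => G (flFull (m + 1) v) * flV (m + 1) a (flFull (m + 1) v))
      (Set.Ioi 0) (simplexT m)
  rw [hsplit, ← Real.Gamma_eq_integral hs₀pos]

end Stmt4Aux

/-- The `p`-th spectral moment of the fixed-trace LUE equals the LUE
moment divided by the rising Pochhammer symbol `(N² + Na)_p`. -/
theorem stmt4 (N : ℕ) (hN : 2 ≤ N) (a : ℝ) (ha : -1 < a) (p : ℕ) :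
    flAvg N a (fun lam => ∑ j, lam j ^ p) =
      lueAvg N a (fun lam => ∑ j, lam j ^ p) /
        (ascPochhammer ℝ p).eval ((N : ℝ) ^ 2 + N * a) := by
  obtain ⟨m, rfl⟩ : ∃ m, N = m + 1 := ⟨N - 1, by omega⟩
  have hGp : ∀ r : ℝ, 0 < r → ∀ mu : Fin (m + 1) → ℝ,
      (∑ j, (r • mu) j ^ p) = r ^ p * ∑ j, mu j ^ p := by
    intro r hr mu
    simp [Pi.smul_apply, smul_eq_mul, mul_pow, Finset.mul_sum]
  have hnum : (∫ x in posOrth (m + 1), (∑ j, x j ^ p) * lueW (m + 1) a x)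
      = Real.Gamma (((m : ℝ) + 1) ^ 2 + ((m : ℝ) + 1) * a + p) *
        ∫ lam in simplexT m,
          (∑ j, flFull (m + 1) lam j ^ p) * flV (m + 1) a (flFull (m + 1) lam) :=
    Stmt4Aux.master m a ha (fun x => ∑ j, x j ^ p) p hGp
  have hden : (∫ x in posOrth (m + 1), lueW (m + 1) a x)
      = Real.Gamma (((m : ℝ) + 1) ^ 2 + ((m : ℝ) + 1) * a) *
        ∫ lam in simplexT m, flV (m + 1) a (flFull (m + 1) lam) := by
    simpa using Stmt4Aux.master m a ha (fun _ => (1:ℝ)) 0 (fun r hr mu => by simp)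
  have hspos : 0 < ((m : ℝ) + 1) ^ 2 + ((m : ℝ) + 1) * a := by
    have h1 : (0:ℝ) < (m:ℝ) + 1 := by positivity
    have h2 : (0:ℝ) < (m:ℝ) + 1 + a := by linarith
    nlinarith
  have hpoch := Stmt4Aux.Gamma_ascPochhammer (((m : ℝ) + 1) ^ 2 + ((m : ℝ) + 1) * a) hspos p
  have hgs : 0 < Real.Gamma (((m : ℝ) + 1) ^ 2 + ((m : ℝ) + 1) * a) :=
    Real.Gamma_pos_of_pos hspos
  have hgsp : 0 < Real.Gamma (((m : ℝ) + 1) ^ 2 + ((m : ℝ) + 1) * a + p) :=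
    Real.Gamma_pos_of_pos (by positivity)
  have hpochpos : 0 < (ascPochhammer ℝ p).eval (((m : ℝ) + 1) ^ 2 + ((m : ℝ) + 1) * a) := by
    nlinarith
  simp only [flAvg, lueAvg, Nat.add_sub_cancel]
  push_cast
  rw [hnum, hden, hpoch]
  rcases eq_or_ne (∫ lam in simplexT m, flV (m + 1) a (flFull (m + 1) lam)) 0 with hB | hB
  · have hB' : (∫ (lam : Fin (m + 1 - 1) → ℝ) in simplexT (m + 1 - 1),
        flV (m + 1) a (flFull (m + 1) lam)) = 0 := hB
    rw [hB', div_zero, hB, mul_zero, div_zero, zero_div]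
  · have e1 : (∫ (lam : Fin (m + 1 - 1) → ℝ) in simplexT (m + 1 - 1),
        flV (m + 1) a (flFull (m + 1) lam)) =
        ∫ lam in simplexT m, flV (m + 1) a (flFull (m + 1) lam) := rfl
    have e2 : (∫ (lam : Fin (m + 1 - 1) → ℝ) in simplexT (m + 1 - 1),
        (∑ j, flFull (m + 1) lam j ^ p) * flV (m + 1) a (flFull (m + 1) lam)) =
        ∫ lam in simplexT m,
          (∑ j, flFull (m + 1) lam j ^ p) * flV (m + 1) a (flFull (m + 1) lam) := rfl
    rw [e1, e2]
    rw [div_div, eq_div_iff (mul_ne_zero (mul_ne_zero hgs.ne' hB) hpochpos.ne'),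
      div_mul_eq_mul_div, div_eq_iff hB]
    ring

end
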